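/- Lower bound on the smoothed class probability at a perturbed input (case ψ < ψ̃): Let x, x̃ ∈ X, let z★ be a longest common subsequence of x and x̃ with L := |z★|, let ψ, ψ̃ ∈ (0,1) with ψ < ψ̃, let f̄ : X → Y be any base classifier and y ∈ Y. Set μ := p_y(x; f̄, ψ) and W := μ − 1 + ψ^{|x|−L}, and let H★ := max{ h ∈ {0,…,L} : Σ_{i=h}^{L} B(L, ψ, i) ≥ W } (this set is nonempty since Σ_{i=0}^{L} B(L, ψ, i) = 1 ≥ W). Then p_y(x̃; f̄, ψ̃) ≥ (ψ̃^{|x̃|−L} / ψ^{|x|−L}) · ( Σ_{i=H★+1}^{L} B(L, ψ̃, i) + B(L, ψ̃, H★) · ⌊ (W − Σ_{j=H★+1}^{L} B(L, ψ, j)) / B(L, ψ, H★) ⌋_{C(L,H★)^{−1}} ). -/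

import Mathlib

/-- Apply a deletion indicator: keep the tokens at positions `i` with `ε i = true`, in order. -/
def applyDel {Ω : Type*} (x : List Ω) (ε : Fin x.length → Bool) : List Ω :=
  (List.finRange x.length).filterMap fun i => if ε i then some (x.get i) else none

/-- Number of retained tokens `|ε|`. -/
def retained {n : ℕ} (ε : Fin n → Bool) : ℕ :=
  (Finset.univ.filter fun i => ε i = true).card

/-- `q_ψ(ε|x) = ψ^{|x|-|ε|} (1-ψ)^{|ε|}`. -/
noncomputable def qdel {Ω : Type*} (ψ : ℝ) (x : List Ω) (ε : Fin x.length → Bool) : ℝ :=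
  ψ ^ (x.length - retained ε) * (1 - ψ) ^ (retained ε)

/-- The score `s_{f̄,ψ}(ε, x) = q_ψ(ε|x)·1[f̄(apply(x,ε)) = y]`. -/
noncomputable def score {Ω Y : Type*} [DecidableEq Y] (f : List Ω → Y) (y : Y) (ψ : ℝ)
    (x : List Ω) (ε : Fin x.length → Bool) : ℝ :=
  qdel ψ x ε * (if f (applyDel x ε) = y then 1 else 0)

/-- The smoothed class probability `p_y(x; f̄, ψ) = Σ_{ε ∈ E(x)} s_{f̄,ψ}(ε, x)`. -/
noncomputable def smoothedProb {Ω Y : Type*} [DecidableEq Y] (f : List Ω → Y) (y : Y)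
    (ψ : ℝ) (x : List Ω) : ℝ :=
  ∑ ε : Fin x.length → Bool, score f y ψ x ε

/-- `z` is a longest common subsequence of `x` and `x̃`. -/
def IsLCS {Ω : Type*} (z x xt : List Ω) : Prop :=
  z.Sublist x ∧ z.Sublist xt ∧ ∀ w : List Ω, w.Sublist x → w.Sublist xt → w.length ≤ z.length

/-- The binomial pmf `B(n, p, k) = C(n,k)·(1−p)^k·p^{n−k}`. -/
noncomputable def binomPMF (n : ℕ) (p : ℝ) (k : ℕ) : ℝ :=
  (n.choose k : ℝ) * (1 - p) ^ k * p ^ (n - k)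

/-- Gridded floor `⌊a⌋_v = v·⌊a/v⌋`. -/
noncomputable def gfloor (a v : ℝ) : ℝ := v * (⌊a / v⌋ : ℤ)

/-- Gridded ceiling `⌈a⌉_v = v·⌈a/v⌉`. -/
noncomputable def gceil (a v : ℝ) : ℝ := v * (⌈a / v⌉ : ℤ)

/-! ### Auxiliary lemmas -/

lemma retained_eq_sum {n : ℕ} (ε : Fin n → Bool) :
    retained ε = ∑ i, if ε i then 1 else 0 :=
  Finset.card_filter _ _

lemma retained_le {n : ℕ} (ε : Fin n → Bool) : retained ε ≤ n := by
  simpa [retained] using Finset.card_filter_le Finset.univ (fun i => ε i = true)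

lemma retained_cons {n : ℕ} (b : Bool) (ε : Fin n → Bool) :
    retained (Fin.cons b ε) = (if b then 1 else 0) + retained ε := by
  rw [retained_eq_sum, retained_eq_sum, Fin.sum_univ_succ]
  simp [Fin.cons_succ, Fin.cons_zero]

lemma applyDel_cons {Ω : Type*} (a : Ω) (l : List Ω) (b : Bool) (ε : Fin l.length → Bool) :
    applyDel (a :: l) (Fin.cons b ε) = (if b then [a] else []) ++ applyDel l ε := by
  show (List.finRange (l.length + 1)).filterMap _ = _
  rw [List.finRange_succ, List.filterMap_cons, List.filterMap_map]
  have hfg : List.filterMap ((fun i => if Fin.cons (α := fun _ => Bool) b ε i = true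
        then some ((a :: l).get i) else none) ∘ Fin.succ) (List.finRange l.length)
      = applyDel l ε := by
    apply List.filterMap_congr
    intro i _
    simp [Function.comp, Fin.cons_succ]
  cases b <;> simp [Fin.cons_zero] <;> simpa using hfg

lemma sublist_extend {Ω : Type*} {z x : List Ω} (h : z.Sublist x) :
    ∃ E : (Fin z.length → Bool) → (Fin x.length → Bool),
      Function.Injective E ∧
      (∀ σ, retained (E σ) = retained σ) ∧
      (∀ σ, applyDel x (E σ) = applyDel z σ) := by
  induction h with
  | slnil => exact ⟨id, Function.injective_id, fun _ => rfl, fun _ => rfl⟩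
  | @cons l₁ l₂ a h ih =>
    obtain ⟨E, hinj, hret, happ⟩ := ih
    refine ⟨fun σ => Fin.cons false (E σ), ?_, ?_, ?_⟩
    · intro σ τ hst
      apply hinj
      funext i
      simpa [Fin.cons_succ] using congrFun hst i.succ
    · intro σ; rw [retained_cons, hret]; simp
    · intro σ
      have : applyDel (a :: l₂) (Fin.cons false (E σ))
          = (if false then [a] else []) ++ applyDel l₂ (E σ) :=
        applyDel_cons a l₂ false (E σ)
      rw [this, happ]; simp
  | @cons_cons l₁ l₂ a h ih =>
    obtain ⟨E, hinj, hret, happ⟩ := ih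
    show ∃ E' : (Fin (l₁.length + 1) → Bool) → (Fin (l₂.length + 1) → Bool),
      Function.Injective E' ∧
      (∀ σ, retained (E' σ) = retained σ) ∧
      (∀ σ, applyDel (a :: l₂) (E' σ) = applyDel (a :: l₁) σ)
    refine ⟨fun σ => Fin.cons (σ 0) (E (Fin.tail σ)), ?_, ?_, ?_⟩
    · intro σ τ hst
      have h0 : σ 0 = τ 0 := by simpa using congrFun hst 0
      have ht : Fin.tail σ = Fin.tail τ := by
        apply hinj
        funext i
        simpa [Fin.cons_succ] using congrFun hst i.succ
      funext i
      refine Fin.cases ?_ ?_ i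
      · exact h0
      · intro j; exact congrFun ht j
    · intro σ
      rw [retained_cons, hret]
      conv_rhs => rw [← Fin.cons_self_tail σ, retained_cons]
    · intro σ
      have h1 : applyDel (a :: l₂) (Fin.cons (σ 0) (E (Fin.tail σ))) =
          (if σ 0 then [a] else []) ++ applyDel l₂ (E (Fin.tail σ)) := applyDel_cons _ _ _ _
      have h2 : applyDel (a :: l₁) (Fin.cons (σ 0) (Fin.tail σ)) =
          (if σ 0 then [a] else []) ++ applyDel l₁ (Fin.tail σ) := applyDel_cons _ _ _ _
      rw [h1, happ, ← h2, Fin.cons_self_tail]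

lemma sum_retained (n : ℕ) (g : ℕ → ℝ) :
    ∑ σ : Fin n → Bool, g (retained σ) =
      ∑ k ∈ Finset.range (n + 1), (n.choose k : ℝ) * g k := by
  induction n generalizing g with
  | zero =>
    have : ∀ σ : Fin 0 → Bool, retained σ = 0 := fun σ => by simp [retained]
    simp [this]
  | succ n ih =>
    have hsum := (Equiv.sum_comp (Fin.consEquiv (fun _ : Fin (n+1) => Bool))
      (fun σ => g (retained σ))).symm
    rw [hsum]
    show ∑ p : Bool × (Fin n → Bool), g (retained (Fin.cons p.1 p.2))
        = ∑ k ∈ Finset.range (n+1+1), ((n+1).choose k : ℝ) * g k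
    simp only [retained_cons]
    rw [Fintype.sum_prod_type, Fintype.sum_bool]
    simp only [if_true, if_false]
    norm_num
    rw [ih (fun k => g (1 + k)), ih g]
    have h4 : ∑ k ∈ Finset.range (n+1), (n.choose k : ℝ) * g (1 + k)
        = ∑ k ∈ Finset.range (n+1), (n.choose k : ℝ) * g (k + 1) :=
      Finset.sum_congr rfl (fun k _ => by rw [Nat.add_comm 1 k])
    rw [h4]
    have E1 : ∑ k ∈ Finset.range (n+2), ((n+1).choose k : ℝ) * g k
        = ∑ k ∈ Finset.range (n+1), ((n+1).choose (k+1) : ℝ) * g (k+1)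
          + ((n+1).choose 0 : ℝ) * g 0 :=
      Finset.sum_range_succ' (fun k => ((n+1).choose k : ℝ) * g k) (n+1)
    have E2 : ∑ k ∈ Finset.range (n+1), ((n+1).choose (k+1) : ℝ) * g (k+1)
        = ∑ k ∈ Finset.range (n+1), (n.choose k : ℝ) * g (k+1)
          + ∑ k ∈ Finset.range (n+1), (n.choose (k+1) : ℝ) * g (k+1) := by
      rw [← Finset.sum_add_distrib]
      refine Finset.sum_congr rfl (fun k _ => ?_)
      rw [Nat.choose_succ_succ]
      push_cast
      ring
    have E3 : ∑ k ∈ Finset.range (n+1), (n.choose (k+1) : ℝ) * g (k+1)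
          + (n.choose 0 : ℝ) * g 0
        = ∑ k ∈ Finset.range (n+1), (n.choose k : ℝ) * g k := by
      have e1 : ∑ k ∈ Finset.range (n+1), (n.choose k : ℝ) * g k
          = ∑ k ∈ Finset.range n, (n.choose (k+1) : ℝ) * g (k+1) + (n.choose 0 : ℝ) * g 0 :=
        Finset.sum_range_succ' (fun k => (n.choose k : ℝ) * g k) n
      have e2 : ∑ k ∈ Finset.range (n+1), (n.choose (k+1) : ℝ) * g (k+1)
          = ∑ k ∈ Finset.range n, (n.choose (k+1) : ℝ) * g (k+1)
            + (n.choose (n+1) : ℝ) * g (n+1) :=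
        Finset.sum_range_succ (fun k => (n.choose (k+1) : ℝ) * g (k+1)) n
      rw [e1, e2, Nat.choose_succ_self]
      push_cast
      ring
    have hc0 : ((n+1).choose 0 : ℝ) = (n.choose 0 : ℝ) := by norm_num
    show _ = ∑ k ∈ Finset.range (n+2), ((n+1).choose k : ℝ) * g k
    rw [E1, E2, hc0]
    linarith [E3]

lemma sum_qdel (n : ℕ) {ψ : ℝ} :
    ∑ ε : Fin n → Bool, ψ ^ (n - retained ε) * (1 - ψ) ^ retained ε = 1 := by
  rw [sum_retained n (fun k => ψ ^ (n - k) * (1 - ψ) ^ k)]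
  calc ∑ k ∈ Finset.range (n+1), (n.choose k : ℝ) * (ψ ^ (n - k) * (1 - ψ) ^ k)
      = ∑ k ∈ Finset.range (n+1), (1 - ψ) ^ k * ψ ^ (n - k) * (n.choose k : ℝ) :=
        Finset.sum_congr rfl (fun k _ => by ring)
    _ = ((1 - ψ) + ψ) ^ n := (add_pow (1 - ψ) ψ n).symm
    _ = 1 := by norm_num

lemma lower_mass {Ω Y : Type*} [DecidableEq Y] (f : List Ω → Y) (y : Y) {ψ : ℝ}
    (hψ0 : 0 < ψ) (hψ1 : ψ < 1) {z x : List Ω} (h : z.Sublist x) :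
    smoothedProb f y ψ x - 1 + ψ ^ (x.length - z.length) ≤
      ψ ^ (x.length - z.length) *
        ∑ σ ∈ Finset.univ.filter (fun σ : Fin z.length → Bool => f (applyDel z σ) = y),
          ψ ^ (z.length - retained σ) * (1 - ψ) ^ retained σ := by
  obtain ⟨E, hinj, hret, happ⟩ := sublist_extend h
  set I : Finset (Fin x.length → Bool) := Finset.univ.image E with hI
  have h1ψ : (0:ℝ) ≤ 1 - ψ := by linarith
  have hq : ∀ σ : Fin z.length → Bool, qdel ψ x (E σ)
      = ψ ^ (x.length - z.length) * (ψ ^ (z.length - retained σ) * (1 - ψ) ^ retained σ) := by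
    intro σ
    have h2 : x.length - retained σ = (x.length - z.length) + (z.length - retained σ) := by
      have := retained_le σ
      have := h.length_le
      omega
    rw [qdel, hret σ, h2, pow_add]
    ring
  have hscore : ∀ σ : Fin z.length → Bool, score f y ψ x (E σ)
      = ψ ^ (x.length - z.length) *
          ((ψ ^ (z.length - retained σ) * (1 - ψ) ^ retained σ) *
            (if f (applyDel z σ) = y then 1 else 0)) := by
    intro σ
    rw [score, hq, happ]
    ring
  have hsumI_q : ∑ ε ∈ I, qdel ψ x ε = ψ ^ (x.length - z.length) := by
    rw [hI, Finset.sum_image (fun a _ b _ hab => hinj hab)]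
    rw [Finset.sum_congr rfl (fun σ _ => hq σ), ← Finset.mul_sum, sum_qdel z.length, mul_one]
  have hsumI_s : ∑ ε ∈ I, score f y ψ x ε
      = ψ ^ (x.length - z.length) *
          ∑ σ ∈ Finset.univ.filter (fun σ : Fin z.length → Bool => f (applyDel z σ) = y),
            ψ ^ (z.length - retained σ) * (1 - ψ) ^ retained σ := by
    rw [hI, Finset.sum_image (fun a _ b _ hab => hinj hab)]
    rw [Finset.sum_congr rfl (fun σ _ => hscore σ), ← Finset.mul_sum]
    congr 1
    rw [Finset.sum_filter]
    refine Finset.sum_congr rfl (fun σ _ => ?_)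
    by_cases hσ : f (applyDel z σ) = y <;> simp [hσ]
  have hq_nonneg : ∀ ε : Fin x.length → Bool, 0 ≤ qdel ψ x ε := by
    intro ε
    rw [qdel]
    positivity
  have hs_le : ∀ ε : Fin x.length → Bool, score f y ψ x ε ≤ qdel ψ x ε := by
    intro ε
    rw [score]
    have := hq_nonneg ε
    split
    · rw [mul_one]
    · rw [mul_zero]; exact this
  have htot : ∑ ε : Fin x.length → Bool, qdel ψ x ε = 1 := by
    simpa [qdel] using sum_qdel (ψ := ψ) x.length
  have hsplit : ∑ ε ∈ Finset.univ \ I, qdel ψ x ε + ∑ ε ∈ I, qdel ψ x ε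
      = ∑ ε : Fin x.length → Bool, qdel ψ x ε :=
    Finset.sum_sdiff (Finset.subset_univ I)
  have hsplit_s : ∑ ε ∈ Finset.univ \ I, score f y ψ x ε + ∑ ε ∈ I, score f y ψ x ε
      = smoothedProb f y ψ x :=
    Finset.sum_sdiff (Finset.subset_univ I)
  have hrest : ∑ ε ∈ Finset.univ \ I, score f y ψ x ε
      ≤ ∑ ε ∈ Finset.univ \ I, qdel ψ x ε :=
    Finset.sum_le_sum (fun ε _ => hs_le ε)
  linarith [hsumI_s, hsumI_q, hsplit, hsplit_s, hrest]

lemma upper_mass {Ω Y : Type*} [DecidableEq Y] (f : List Ω → Y) (y : Y) {ψt : ℝ}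
    (hψt0 : 0 < ψt) (hψt1 : ψt < 1) {z xt : List Ω} (h : z.Sublist xt) :
    ψt ^ (xt.length - z.length) *
        ∑ σ ∈ Finset.univ.filter (fun σ : Fin z.length → Bool => f (applyDel z σ) = y),
          ψt ^ (z.length - retained σ) * (1 - ψt) ^ retained σ
      ≤ smoothedProb f y ψt xt := by
  obtain ⟨E, hinj, hret, happ⟩ := sublist_extend h
  set I : Finset (Fin xt.length → Bool) := Finset.univ.image E with hI
  have h1ψ : (0:ℝ) ≤ 1 - ψt := by linarith
  have hscore : ∀ σ : Fin z.length → Bool, score f y ψt xt (E σ)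
      = ψt ^ (xt.length - z.length) *
          ((ψt ^ (z.length - retained σ) * (1 - ψt) ^ retained σ) *
            (if f (applyDel z σ) = y then 1 else 0)) := by
    intro σ
    have h2 : xt.length - retained σ = (xt.length - z.length) + (z.length - retained σ) := by
      have := retained_le σ
      have := h.length_le
      omega
    rw [score, qdel, hret σ, h2, pow_add, happ]
    ring
  have hsumI_s : ∑ ε ∈ I, score f y ψt xt ε
      = ψt ^ (xt.length - z.length) *
          ∑ σ ∈ Finset.univ.filter (fun σ : Fin z.length → Bool => f (applyDel z σ) = y),
            ψt ^ (z.length - retained σ) * (1 - ψt) ^ retained σ := by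
    rw [hI, Finset.sum_image (fun a _ b _ hab => hinj hab)]
    rw [Finset.sum_congr rfl (fun σ _ => hscore σ), ← Finset.mul_sum]
    congr 1
    rw [Finset.sum_filter]
    refine Finset.sum_congr rfl (fun σ _ => ?_)
    by_cases hσ : f (applyDel z σ) = y <;> simp [hσ]
  have hs_nonneg : ∀ ε : Fin xt.length → Bool, 0 ≤ score f y ψt xt ε := by
    intro ε
    rw [score, qdel]
    have : (0:ℝ) ≤ (if f (applyDel xt ε) = y then (1:ℝ) else 0) := by positivity
    positivity
  have hle : ∑ ε ∈ I, score f y ψt xt ε ≤ smoothedProb f y ψt xt :=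
    Finset.sum_le_sum_of_subset_of_nonneg (Finset.subset_univ I)
      (fun ε _ _ => hs_nonneg ε)
  linarith [hsumI_s, hle]

lemma ratio_mono {ψ ψt : ℝ} (hψ0 : 0 < ψ) (hψ1 : ψ < 1) (hψt0 : 0 < ψt) (hψt1 : ψt < 1)
    (hle : ψ ≤ ψt) {u v L : ℕ} (huv : u ≤ v) (hvL : v ≤ L) :
    ψt ^ (L - v) * (1 - ψt) ^ v * (ψ ^ (L - u) * (1 - ψ) ^ u) ≤
      ψt ^ (L - u) * (1 - ψt) ^ u * (ψ ^ (L - v) * (1 - ψ) ^ v) := by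
  obtain ⟨d, rfl⟩ : ∃ d, v = u + d := ⟨v - u, by omega⟩
  obtain ⟨e, rfl⟩ : ∃ e, L = (u + d) + e := ⟨L - (u + d), by omega⟩
  have h1 : u + d + e - (u + d) = e := by omega
  have h2 : u + d + e - u = d + e := by omega
  rw [h1, h2]
  have key : (1 - ψt) ^ d * ψ ^ d ≤ (1 - ψ) ^ d * ψt ^ d := by
    have := pow_le_pow_left₀ (a := (1 - ψt) * ψ) (b := (1 - ψ) * ψt) (by nlinarith) (by nlinarith) d
    rw [mul_pow, mul_pow] at this
    exact this
  have a1 : (0:ℝ) ≤ 1 - ψ := by linarith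
  have a2 : (0:ℝ) ≤ 1 - ψt := by linarith
  have hK : 0 ≤ ψt ^ e * ψ ^ e * (1 - ψt) ^ u * (1 - ψ) ^ u := by positivity
  calc ψt ^ e * (1 - ψt) ^ (u + d) * (ψ ^ (d + e) * (1 - ψ) ^ u)
      = (ψt ^ e * ψ ^ e * (1 - ψt) ^ u * (1 - ψ) ^ u) * ((1 - ψt) ^ d * ψ ^ d) := by ring
    _ ≤ (ψt ^ e * ψ ^ e * (1 - ψt) ^ u * (1 - ψ) ^ u) * ((1 - ψ) ^ d * ψt ^ d) :=
        mul_le_mul_of_nonneg_left key hK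
    _ = ψt ^ (d + e) * (1 - ψt) ^ u * (ψ ^ e * (1 - ψ) ^ (u + d)) := by ring

lemma binomPMF_pos {L H : ℕ} {ψ : ℝ} (hψ0 : 0 < ψ) (hψ1 : ψ < 1) (hHL : H ≤ L) :
    0 < binomPMF L ψ H := by
  rw [binomPMF]
  have hc : (0:ℝ) < (L.choose H : ℝ) := by exact_mod_cast Nat.choose_pos hHL
  have h1 : (0:ℝ) < 1 - ψ := by linarith
  positivity

lemma binom_ratio {ψ ψt : ℝ} (hψ0 : 0 < ψ) (hψ1 : ψ < 1) (hψt0 : 0 < ψt) (hψt1 : ψt < 1)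
    (hle : ψ ≤ ψt) {L H k : ℕ} (hHL : H ≤ L) (hHk : H ≤ k) (hkL : k ≤ L) :
    binomPMF L ψt k ≤ binomPMF L ψt H / binomPMF L ψ H * binomPMF L ψ k := by
  have hBH := binomPMF_pos hψ0 hψ1 hHL
  rw [div_mul_eq_mul_div, le_div_iff₀ hBH]
  have rm := ratio_mono hψ0 hψ1 hψt0 hψt1 hle hHk hkL
  have hc : (0:ℝ) ≤ (L.choose k : ℝ) * (L.choose H : ℝ) := by positivity
  have key := mul_le_mul_of_nonneg_left rm hc
  calc binomPMF L ψt k * binomPMF L ψ H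
      = (L.choose k : ℝ) * (L.choose H : ℝ) *
          (ψt ^ (L - k) * (1 - ψt) ^ k * (ψ ^ (L - H) * (1 - ψ) ^ H)) := by
        rw [binomPMF, binomPMF]; ring
    _ ≤ (L.choose k : ℝ) * (L.choose H : ℝ) *
          (ψt ^ (L - H) * (1 - ψt) ^ H * (ψ ^ (L - k) * (1 - ψ) ^ k)) := key
    _ = binomPMF L ψt H * binomPMF L ψ k := by rw [binomPMF, binomPMF]; ring

lemma np_core {ψ ψt : ℝ} (hψ0 : 0 < ψ) (hψ1 : ψ < 1) (hψt0 : 0 < ψt) (hψt1 : ψt < 1)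
    (hle : ψ ≤ ψt) (L H : ℕ) (hHL : H ≤ L) (A : Finset (Fin L → Bool)) :
    ∑ k ∈ Finset.Icc (H+1) L,
        (binomPMF L ψt k - binomPMF L ψt H / binomPMF L ψ H * binomPMF L ψ k)
      + binomPMF L ψt H / binomPMF L ψ H *
          ∑ σ ∈ A, ψ ^ (L - retained σ) * (1 - ψ) ^ retained σ
    ≤ ∑ σ ∈ A, ψt ^ (L - retained σ) * (1 - ψt) ^ retained σ := by
  have h1ψ : (0:ℝ) < 1 - ψ := by linarith
  have h1ψt : (0:ℝ) < 1 - ψt := by linarith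
  set r := binomPMF L ψt H / binomPMF L ψ H with hrdef
  have hbH : (0:ℝ) < ψ ^ (L - H) * (1 - ψ) ^ H := by positivity
  have hr : r = (ψt ^ (L - H) * (1 - ψt) ^ H) / (ψ ^ (L - H) * (1 - ψ) ^ H) := by
    rw [hrdef, binomPMF, binomPMF]
    have hc : (L.choose H : ℝ) ≠ 0 := by
      exact_mod_cast Nat.pos_iff_ne_zero.mp (Nat.choose_pos hHL)
    field_simp
  set c : ℕ → ℝ := fun k =>
    ψt ^ (L - k) * (1 - ψt) ^ k - r * (ψ ^ (L - k) * (1 - ψ) ^ k) with hcdef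
  have hcneg : ∀ k, H ≤ k → k ≤ L → c k ≤ 0 := by
    intro k hHk hkL
    rw [hcdef]
    simp only
    rw [sub_nonpos, hr, div_mul_eq_mul_div, le_div_iff₀ hbH]
    exact ratio_mono hψ0 hψ1 hψt0 hψt1 hle hHk hkL
  have hcpos : ∀ k, k ≤ H → 0 ≤ c k := by
    intro k hkH
    rw [hcdef]
    simp only
    rw [sub_nonneg, hr, div_mul_eq_mul_div, div_le_iff₀ hbH]
    exact ratio_mono hψ0 hψ1 hψt0 hψt1 hle hkH hHL
  have step1 : ∑ σ : Fin L → Bool, (if H + 1 ≤ retained σ then c (retained σ) else 0)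
      ≤ ∑ σ : Fin L → Bool, (if σ ∈ A then c (retained σ) else 0) := by
    refine Finset.sum_le_sum (fun σ _ => ?_)
    by_cases hmem : σ ∈ A
    · by_cases hret : H + 1 ≤ retained σ <;> simp only [hmem, hret, if_true, if_false]
      · exact le_refl _
      · exact hcpos _ (by omega)
    · by_cases hret : H + 1 ≤ retained σ <;> simp only [hmem, hret, if_true, if_false]
      · exact hcneg _ (by omega) (retained_le σ)
      · exact le_refl _
  have step1' : ∑ σ : Fin L → Bool, (if σ ∈ A then c (retained σ) else 0)
      = ∑ σ ∈ A, c (retained σ) := by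
    rw [Finset.sum_ite_mem, Finset.univ_inter]
  have step2 : ∑ σ : Fin L → Bool, (if H + 1 ≤ retained σ then c (retained σ) else 0)
      = ∑ k ∈ Finset.Icc (H+1) L,
          (binomPMF L ψt k - r * binomPMF L ψ k) := by
    rw [sum_retained L (fun k => if H + 1 ≤ k then c k else 0)]
    have hfil : Finset.Icc (H+1) L = (Finset.range (L+1)).filter (fun k => H + 1 ≤ k) := by
      ext k
      simp [Nat.lt_succ_iff]
      omega
    rw [hfil, Finset.sum_filter]
    refine Finset.sum_congr rfl (fun k _ => ?_)
    by_cases hk : H + 1 ≤ k <;> simp only [hk, if_true, if_false, mul_zero]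
    rw [hcdef]
    simp only
    rw [binomPMF, binomPMF]
    ring
  have hsub : ∑ σ ∈ A, c (retained σ)
      = ∑ σ ∈ A, ψt ^ (L - retained σ) * (1 - ψt) ^ retained σ
        - r * ∑ σ ∈ A, ψ ^ (L - retained σ) * (1 - ψ) ^ retained σ := by
    rw [Finset.mul_sum, ← Finset.sum_sub_distrib]
  linarith [step1, step1', step2, hsub]

lemma gfloor_le {a v : ℝ} (hv : 0 < v) : gfloor a v ≤ a := by
  rw [gfloor]
  calc v * (⌊a / v⌋ : ℤ) ≤ v * (a / v) :=
        mul_le_mul_of_nonneg_left (Int.floor_le _) hv.le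
    _ = a := by field_simp

/-- lower bound on the smoothed class probability at a perturbed input,
case `ψ < ψ̃`. -/
theorem stmt12 {Ω Y : Type*} [DecidableEq Y] (x xt zs : List Ω)
    (hz : IsLCS zs x xt) (L : ℕ) (hL : L = zs.length)
    (ψ ψt : ℝ) (hψ : ψ ∈ Set.Ioo (0 : ℝ) 1) (hψt : ψt ∈ Set.Ioo (0 : ℝ) 1)
    (hlt : ψ < ψt)
    (f : List Ω → Y) (y : Y)
    (μ W : ℝ) (hμ : μ = smoothedProb f y ψ x)
    (hW : W = μ - 1 + ψ ^ (x.length - L))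
    (H : ℕ)
    (hH : H = sSup {h | h ≤ L ∧ W ≤ ∑ i ∈ Finset.Icc h L, binomPMF L ψ i}) :
    smoothedProb f y ψt xt ≥
      ψt ^ (xt.length - L) / ψ ^ (x.length - L) *
        (∑ i ∈ Finset.Icc (H + 1) L, binomPMF L ψt i +
          binomPMF L ψt H *
            gfloor ((W - ∑ j ∈ Finset.Icc (H + 1) L, binomPMF L ψ j) / binomPMF L ψ H)
              ((L.choose H : ℝ)⁻¹)) := by
  obtain ⟨hψ0, hψ1⟩ := hψ
  obtain ⟨hψt0, hψt1⟩ := hψt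
  subst hL
  have h1ψ : (0:ℝ) < 1 - ψ := by linarith
  have h1ψt : (0:ℝ) < 1 - ψt := by linarith
  have hHL : H ≤ zs.length := by
    rw [hH]
    rcases Set.eq_empty_or_nonempty
        {h | h ≤ zs.length ∧ W ≤ ∑ i ∈ Finset.Icc h zs.length, binomPMF zs.length ψ i} with
      he | hne
    · rw [he, csSup_empty]
      exact bot_le
    · exact csSup_le hne (fun b hb => hb.1)
  set A := Finset.univ.filter (fun σ : Fin zs.length → Bool => f (applyDel zs σ) = y) with hA
  set aS := ∑ σ ∈ A, ψ ^ (zs.length - retained σ) * (1 - ψ) ^ retained σ with haS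
  set bS := ∑ σ ∈ A, ψt ^ (zs.length - retained σ) * (1 - ψt) ^ retained σ with hbS
  set ρ := ψ ^ (x.length - zs.length) with hρdef
  set π := ψt ^ (xt.length - zs.length) with hπdef
  have hρ0 : 0 < ρ := by rw [hρdef]; positivity
  have hρ1 : ρ ≤ 1 := by rw [hρdef]; exact pow_le_one₀ hψ0.le hψ1.le
  have hπ0 : 0 ≤ π := by rw [hπdef]; positivity
  have hW' : W ≤ ρ * aS := by
    have h := lower_mass f y hψ0 hψ1 hz.1
    rw [hW, hμ]
    exact h
  set r := binomPMF zs.length ψt H / binomPMF zs.length ψ H with hrdef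
  have hnp := np_core hψ0 hψ1 hψt0 hψt1 hlt.le zs.length H hHL A
  have hup := upper_mass f y hψt0 hψt1 hz.2.1
  have hBH : 0 < binomPMF zs.length ψ H := binomPMF_pos hψ0 hψ1 hHL
  have hBtH : 0 ≤ binomPMF zs.length ψt H := by
    rw [binomPMF]
    positivity
  have hr0 : 0 ≤ r := by rw [hrdef]; exact div_nonneg hBtH hBH.le
  set SB := ∑ j ∈ Finset.Icc (H+1) zs.length, binomPMF zs.length ψ j with hSB
  set SBt := ∑ i ∈ Finset.Icc (H+1) zs.length, binomPMF zs.length ψt i with hSBt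
  have hD : ∑ k ∈ Finset.Icc (H+1) zs.length,
      (binomPMF zs.length ψt k - r * binomPMF zs.length ψ k) = SBt - r * SB := by
    rw [hSBt, hSB, Finset.mul_sum, ← Finset.sum_sub_distrib]
  have hD0 : SBt - r * SB ≤ 0 := by
    rw [← hD]
    apply Finset.sum_nonpos
    intro k hk
    rw [Finset.mem_Icc] at hk
    have := binom_ratio hψ0 hψ1 hψt0 hψt1 hlt.le hHL (by omega) hk.2
    rw [hrdef]
    linarith
  have hchoosev : (0:ℝ) < ((zs.length.choose H : ℝ))⁻¹ := by
    have : (0:ℝ) < (zs.length.choose H : ℝ) := by exact_mod_cast Nat.choose_pos hHL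
    positivity
  have hgf : binomPMF zs.length ψt H *
      gfloor ((W - SB) / binomPMF zs.length ψ H) ((zs.length.choose H : ℝ)⁻¹)
        ≤ r * W - r * SB := by
    have h1 := gfloor_le (a := (W - SB) / binomPMF zs.length ψ H) hchoosev
    have h2 := mul_le_mul_of_nonneg_left h1 hBtH
    calc binomPMF zs.length ψt H *
        gfloor ((W - SB) / binomPMF zs.length ψ H) ((zs.length.choose H : ℝ)⁻¹)
        ≤ binomPMF zs.length ψt H * ((W - SB) / binomPMF zs.length ψ H) := h2
      _ = r * W - r * SB := by
          rw [hrdef]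
          field_simp
  have e1 : r * W ≤ r * (ρ * aS) := mul_le_mul_of_nonneg_left hW' hr0
  have e2 : (1 - ρ) * (SBt - r * SB) ≤ 0 :=
    mul_nonpos_of_nonneg_of_nonpos (by linarith) hD0
  have key : (SBt - r * SB) + r * W ≤ ρ * ((SBt - r * SB) + r * aS) := by nlinarith [e1, e2]
  have hbS_lb : (SBt - r * SB) + r * W ≤ ρ * bS := by
    nlinarith [key, mul_le_mul_of_nonneg_left hnp hρ0.le, hD]
  have hΦ : SBt + binomPMF zs.length ψt H *
      gfloor ((W - SB) / binomPMF zs.length ψ H) ((zs.length.choose H : ℝ)⁻¹) ≤ ρ * bS := by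
    linarith [hgf, hbS_lb]
  rw [ge_iff_le]
  calc π / ρ * (SBt + binomPMF zs.length ψt H *
        gfloor ((W - SB) / binomPMF zs.length ψ H) ((zs.length.choose H : ℝ)⁻¹))
      ≤ π / ρ * (ρ * bS) := mul_le_mul_of_nonneg_left hΦ (div_nonneg hπ0 hρ0.le)
    _ = π * bS := by
        field_simp
    _ ≤ smoothedProb f y ψt xt := hup
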